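/- (Gamma-function form of the Fourier coefficients of the Legendre kernel.) For every s ∈ ℂ that is not an integer and every natural number k, the following Gamma-function identity holds: (−1)ᵏ · (π / 4ᵏ) · Γ(s + k + 1) / Γ(s − k + 1) · ( Γ((k − s + 1)/2) )⁻² · ( Γ((k + s)/2 + 1) )⁻² = − ( sin(π s) / π ) · (k + s)⁻¹ · Γ((k − s)/2) Γ((k + s + 1)/2) / ( Γ((k + s)/2) Γ((k − s + 1)/2) ). -/

import Mathlib

open Complex Real

theorem legendre_fourier_gamma (s : ℂ) (hs : ∀ n : ℤ, s ≠ (n : ℂ)) (k : ℕ) :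
    (-1 : ℂ) ^ k * ((Real.pi : ℂ) / 4 ^ k) *
        Complex.Gamma (s + (k : ℂ) + 1) / Complex.Gamma (s - (k : ℂ) + 1) *
        (Complex.Gamma (((k : ℂ) - s + 1) / 2))⁻¹ ^ 2 *
        (Complex.Gamma (((k : ℂ) + s) / 2 + 1))⁻¹ ^ 2 =
      -(Complex.sin ((Real.pi : ℂ) * s) / (Real.pi : ℂ)) * ((k : ℂ) + s)⁻¹ *
        (Complex.Gamma (((k : ℂ) - s) / 2) * Complex.Gamma (((k : ℂ) + s + 1) / 2)) /
        (Complex.Gamma (((k : ℂ) + s) / 2) * Complex.Gamma (((k : ℂ) - s + 1) / 2)) := by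
  have hπ : (Real.pi : ℂ) ≠ 0 := Complex.ofReal_ne_zero.mpr Real.pi_ne_zero
  set a : ℂ := ((k : ℂ) + s) / 2 with ha_def
  set b : ℂ := ((k : ℂ) - s) / 2 with hb_def
  -- nonvanishing
  have hplus : ∀ p : ℤ, Complex.Gamma (((p : ℂ) + s) / 2) ≠ 0 := by
    intro p
    refine Complex.Gamma_ne_zero fun m h => hs (-2 * m - p) ?_
    push_cast
    have h2 : ((p : ℂ) + s) / 2 + m = 0 := by rw [h]; ring
    linear_combination 2 * h2
  have hminus : ∀ p : ℤ, Complex.Gamma (((p : ℂ) - s) / 2) ≠ 0 := by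
    intro p
    refine Complex.Gamma_ne_zero fun m h => hs (p + 2 * m) ?_
    push_cast
    have h2 : ((p : ℂ) - s) / 2 + m = 0 := by rw [h]; ring
    linear_combination -2 * h2
  have hA : Complex.Gamma a ≠ 0 := by
    have := hplus k; simpa [ha_def] using this
  have hA' : Complex.Gamma (a + 1 / 2) ≠ 0 := by
    have := hplus (k + 1)
    have e : (((k : ℤ) + 1 : ℤ) : ℂ) = (k : ℂ) + 1 := by push_cast; ring
    rw [e] at this
    have e2 : ((k : ℂ) + 1 + s) / 2 = a + 1 / 2 := by rw [ha_def]; ring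
    rwa [e2] at this
  have hB : Complex.Gamma b ≠ 0 := by
    have := hminus k; simpa [hb_def] using this
  have hB' : Complex.Gamma (b + 1 / 2) ≠ 0 := by
    have := hminus (k + 1)
    have e : (((k : ℤ) + 1 : ℤ) : ℂ) = (k : ℂ) + 1 := by push_cast; ring
    rw [e] at this
    have e2 : ((k : ℂ) + 1 - s) / 2 = b + 1 / 2 := by rw [hb_def]; ring
    rwa [e2] at this
  have hks : (k : ℂ) + s ≠ 0 := fun h => hs (-k) (by push_cast; linear_combination h)
  have ha : a ≠ 0 := div_ne_zero hks two_ne_zero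
  have hsn : Complex.sin ((Real.pi : ℂ) * s) ≠ 0 := by
    rw [Complex.sin_ne_zero_iff]
    intro n h
    exact hs n (mul_left_cancel₀ hπ (by rw [h]; ring))
  -- sin(π(k - s)) = (-1)^(k+1) sin(π s)
  have hsinkm : Complex.sin ((Real.pi : ℂ) * ((k : ℂ) - s)) =
      -((-1) ^ k * Complex.sin ((Real.pi : ℂ) * s)) := by
    have e : (Real.pi : ℂ) * ((k : ℂ) - s) = (k : ℂ) * Real.pi - Real.pi * s := by ring
    rw [e, Complex.sin_sub, Complex.sin_nat_mul_pi]
    have hc : Complex.cos ((k : ℂ) * Real.pi) = (-1) ^ k := by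
      rw [show ((k : ℂ) * Real.pi) = (((k : ℝ) * Real.pi : ℝ) : ℂ) by push_cast; ring,
        ← Complex.ofReal_cos]
      have : Real.cos ((k : ℤ) * Real.pi - 0) = (-1) ^ (k : ℤ) * Real.cos 0 :=
        Real.cos_int_mul_pi_sub 0 k
      simp at this
      push_cast [this]
      norm_num
    rw [hc]; ring
  -- duplication for a and b
  have hr : ((Real.sqrt Real.pi : ℝ) : ℂ) ≠ 0 :=
    Complex.ofReal_ne_zero.mpr (Real.sqrt_ne_zero'.mpr Real.pi_pos)
  have hsq : ((Real.sqrt Real.pi : ℝ) : ℂ) * ((Real.sqrt Real.pi : ℝ) : ℂ) = (Real.pi : ℂ) := by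
    rw [← Complex.ofReal_mul, Real.mul_self_sqrt Real.pi_pos.le]
  have hdup1 : Complex.Gamma a * Complex.Gamma (a + 1 / 2) =
      Complex.Gamma ((k : ℂ) + s) * (2 : ℂ) ^ ((1 : ℂ) - ((k : ℂ) + s)) *
        ((Real.sqrt Real.pi : ℝ) : ℂ) := by
    have := Complex.Gamma_mul_Gamma_add_half a
    rwa [show (2 : ℂ) * a = (k : ℂ) + s by rw [ha_def]; ring] at this
  have hdup2 : Complex.Gamma b * Complex.Gamma (b + 1 / 2) =
      Complex.Gamma ((k : ℂ) - s) * (2 : ℂ) ^ ((1 : ℂ) - ((k : ℂ) - s)) *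
        ((Real.sqrt Real.pi : ℝ) : ℂ) := by
    have := Complex.Gamma_mul_Gamma_add_half b
    rwa [show (2 : ℂ) * b = (k : ℂ) - s by rw [hb_def]; ring] at this
  -- power identity
  have hpw : (2 : ℂ) ^ ((1 : ℂ) - ((k : ℂ) + s)) * (2 : ℂ) ^ ((1 : ℂ) - ((k : ℂ) - s)) =
      4 / 4 ^ k := by
    rw [← Complex.cpow_add _ _ two_ne_zero,
      show (1 : ℂ) - ((k : ℂ) + s) + ((1 : ℂ) - ((k : ℂ) - s)) = ((2 - 2 * (k : ℤ) : ℤ) : ℂ) by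
        push_cast; ring,
      Complex.cpow_intCast]
    rw [zpow_sub₀ (two_ne_zero)]
    norm_num
    rw [show ((2 : ℤ) * k) = ((2 * k : ℕ) : ℤ) by push_cast; ring, zpow_natCast, pow_mul]
    norm_num
  have hpw' : (2 : ℂ) ^ ((1 : ℂ) - ((k : ℂ) + s)) * (2 : ℂ) ^ ((1 : ℂ) - ((k : ℂ) - s)) * 4 ^ k =
      4 := by
    rw [hpw]; field_simp
  have hY : Complex.Gamma ((k : ℂ) - s) ≠ 0 := by
    refine Complex.Gamma_ne_zero fun m h => hs (k + m) ?_
    push_cast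
    linear_combination -h
  have hsinkm' : Complex.sin ((Real.pi : ℂ) * ((k : ℂ) - s)) ≠ 0 := by
    rw [hsinkm]
    simp only [ne_eq, neg_eq_zero, mul_eq_zero, not_or]
    exact ⟨pow_ne_zero _ (by norm_num), hsn⟩
  have hrefl : Complex.Gamma (s - (k : ℂ) + 1) =
      (Real.pi : ℂ) / (Complex.sin ((Real.pi : ℂ) * ((k : ℂ) - s)) * Complex.Gamma ((k : ℂ) - s)) := by
    have h := Complex.Gamma_mul_Gamma_one_sub ((k : ℂ) - s)
    rw [show (1 : ℂ) - ((k : ℂ) - s) = s - (k : ℂ) + 1 by ring,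
      eq_div_iff hsinkm'] at h
    rw [eq_div_iff (mul_ne_zero hsinkm' hY)]
    linear_combination h
  have hprod : Complex.Gamma ((k : ℂ) + s) * Complex.Gamma ((k : ℂ) - s) * (4 * (Real.pi : ℂ)) =
      Complex.Gamma a * Complex.Gamma (a + 1 / 2) * Complex.Gamma b * Complex.Gamma (b + 1 / 2)
        * 4 ^ k := by
    linear_combination (-(Complex.Gamma b * Complex.Gamma (b + 1 / 2) * (4:ℂ) ^ k)) * hdup1 +
      (-(Complex.Gamma ((k : ℂ) + s) * (2 : ℂ) ^ ((1 : ℂ) - ((k : ℂ) + s)) *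
          ((Real.sqrt Real.pi : ℝ) : ℂ) * (4:ℂ) ^ k)) * hdup2 +
      (-(Complex.Gamma ((k : ℂ) + s) * Complex.Gamma ((k : ℂ) - s) *
          (2 : ℂ) ^ ((1 : ℂ) - ((k : ℂ) + s)) * (2 : ℂ) ^ ((1 : ℂ) - ((k : ℂ) - s)) *
          (4:ℂ) ^ k)) * hsq +
      (-(Complex.Gamma ((k : ℂ) + s) * Complex.Gamma ((k : ℂ) - s) * (Real.pi : ℂ))) * hpw'
  -- rewrite goal
  rw [show ((k : ℂ) - s + 1) / 2 = b + 1 / 2 by rw [hb_def]; ring,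
    show ((k : ℂ) + s + 1) / 2 = a + 1 / 2 by rw [ha_def]; ring,
    show s + (k : ℂ) + 1 = ((k : ℂ) + s) + 1 by ring,
    Complex.Gamma_add_one _ hks, hrefl, Complex.Gamma_add_one a ha, hsinkm]
  have h4k : (4 : ℂ) ^ k ≠ 0 := pow_ne_zero _ (by norm_num)
  have hX : Complex.Gamma ((k : ℂ) + s) ≠ 0 := by
    refine Complex.Gamma_ne_zero fun m h => hs (-(k : ℤ) - m) ?_
    push_cast
    linear_combination h
  have hm1 : ((-1 : ℂ)) ^ k ≠ 0 := pow_ne_zero _ (by norm_num)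
  field_simp
  simp only [show (a * 2 + 1) / 2 = a + 1 / 2 from by ring,
    show (b * 2 + 1) / 2 = b + 1 / 2 from by ring]
  rw [show (2 * a + 1) / 2 = a + 1 / 2 by ring, neg_inj, div_eq_div_iff (pow_ne_zero 2 hB') hB']
  rw [show ((k : ℂ) + s) = 2 * a by rw [ha_def]; ring] at hprod ⊢
  have hneg : (((-1 : ℂ)) ^ k) ^ 2 = 1 := by
    rw [← pow_mul, mul_comm, pow_mul]; norm_num
  linear_combination (Complex.Gamma (b + 1 / 2) * ((-1 : ℂ) ^ k) ^ 2 * a ^ 2) * hprod +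
    (Complex.Gamma (b + 1 / 2) ^ 2 * (4 ^ k * a ^ 2 * Complex.Gamma a * Complex.Gamma b *
      Complex.Gamma (a + 1 / 2))) * hneg
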